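/- Let Ω ⊂ ℝ^N be an unbounded domain and V ∈ L²_loc(Ω) with inf_Ω V > 0. Then ∫_{S(x)∩Ω} 1/V(ξ) dξ → 0 as |x| → ∞ if and only if for every b > 0, |S(x) ∩ Ω_b| → 0 as |x| → ∞, where Ω_b = {x ∈ Ω : V(x) ≤ b}. In particular, if V is identically constant the condition reduces to |S(x) ∩ Ω| → 0 as |x| → ∞. -/

import Mathlib

open MeasureTheory Filter Topology Metric Set

noncomputable section

abbrev Euc (N : ℕ) := EuclideanSpace ℝ (Fin N)

/-- the filter `|x| → ∞` on `ℝ^N`. -/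
def atInfty (N : ℕ) : Filter (Euc N) := Bornology.cobounded (Euc N)

/-- **Characterization of condition (V).** For an unbounded domain `Ω ⊂ ℝ^N` and
`V ∈ L²_loc(Ω)` with `inf_Ω V > 0`, the condition `∫_{S(x)∩Ω} 1/V → 0` as `|x| → ∞` holds
iff for every `b > 0`, `|S(x) ∩ Ω_b| → 0` as `|x| → ∞`, where `Ω_b = {x ∈ Ω : V x ≤ b}`.
In particular, for `V` identically constant on `Ω` it reduces to `|S(x) ∩ Ω| → 0`. -/
theorem condV_iff_shrinking_sublevels
    {N : ℕ} (Ω : Set (Euc N)) (hΩopen : IsOpen Ω) (hΩunb : ¬ Bornology.IsBounded Ω)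
    (V : Euc N → ℝ)
    (hloc : ∀ x : Euc N, IntegrableOn (fun ξ => (V ξ) ^ 2) (Ω ∩ ball x 1) volume)
    (hpos : ∃ v₀ > 0, ∀ x ∈ Ω, v₀ ≤ V x) :
    ((Tendsto (fun x : Euc N => ∫ ξ in ball x 1 ∩ Ω, 1 / V ξ) (atInfty N) (𝓝 0)) ↔
      (∀ b > (0:ℝ), Tendsto
        (fun x : Euc N => (volume (ball x 1 ∩ {y ∈ Ω | V y ≤ b})).toReal)
        (atInfty N) (𝓝 0))) ∧
    (∀ cst : ℝ, 0 < cst → (∀ x ∈ Ω, V x = cst) →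
      ((Tendsto (fun x : Euc N => ∫ ξ in ball x 1 ∩ Ω, 1 / V ξ) (atInfty N) (𝓝 0)) ↔
        Tendsto (fun x : Euc N => (volume (ball x 1 ∩ Ω)).toReal) (atInfty N) (𝓝 0))) := by
  obtain ⟨v₀, hv₀, hV⟩ := hpos
  have hΩm : MeasurableSet Ω := hΩopen.measurableSet
  have hsm : ∀ x : Euc N, MeasurableSet (ball x 1 ∩ Ω) :=
    fun x => (measurableSet_ball).inter hΩm
  -- Step 1 : a measurable version `g` of `V` on `Ω`, with `g ≥ v₀` everywhere.
  obtain ⟨d, hd⟩ := TopologicalSpace.exists_dense_seq (Euc N)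
  have hcover : Ω = ⋃ n, Ω ∩ ball (d n) 1 := by
    ext y
    simp only [mem_iUnion, mem_inter_iff]
    constructor
    · intro hy
      obtain ⟨n, hn⟩ := hd.exists_dist_lt y one_pos
      exact ⟨n, hy, by simpa [mem_ball, dist_comm] using hn⟩
    · rintro ⟨n, hy, -⟩; exact hy
  have hVsq : AEStronglyMeasurable (fun ξ => (V ξ) ^ 2) (volume.restrict Ω) := by
    rw [hcover, aestronglyMeasurable_iUnion_iff]
    exact fun n => (hloc (d n)).aestronglyMeasurable
  have haeV : AEStronglyMeasurable V (volume.restrict Ω) := by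
    refine ((Real.continuous_sqrt.comp_aestronglyMeasurable hVsq)).congr ?_
    filter_upwards [ae_restrict_mem hΩm] with y hy
    exact Real.sqrt_sq (le_trans hv₀.le (hV y hy))
  set g0 : Euc N → ℝ := haeV.mk V with hg0def
  set g : Euc N → ℝ := fun y => max v₀ (g0 y) with hgdef
  have hgmeas : Measurable g :=
    measurable_const.max haeV.stronglyMeasurable_mk.measurable
  have hgv₀ : ∀ y, v₀ ≤ g y := fun y => le_max_left _ _
  have hgpos : ∀ y, 0 < g y := fun y => lt_of_lt_of_le hv₀ (hgv₀ y)
  have hgV : ∀ᵐ y ∂(volume.restrict Ω), V y = g y := by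
    filter_upwards [haeV.ae_eq_mk, ae_restrict_mem hΩm] with y h1 h2
    have hle : v₀ ≤ g0 y := le_of_le_of_eq (hV y h2) h1
    show V y = max v₀ (g0 y)
    rw [max_eq_right hle]; exact h1
  -- the exceptional null set
  have hE : volume ({y | V y ≠ g y} ∩ Ω) = 0 := by
    have := hgV
    rw [ae_iff, Measure.restrict_apply' hΩm] at this
    simpa using this
  -- pointwise congruences
  have hIcong : ∀ x : Euc N,
      ∫ ξ in ball x 1 ∩ Ω, 1 / V ξ = ∫ ξ in ball x 1 ∩ Ω, 1 / g ξ := by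
    intro x
    apply integral_congr_ae
    change ∀ᵐ ξ ∂(volume.restrict (ball x 1 ∩ Ω)), 1 / V ξ = 1 / g ξ
    rw [ae_iff, Measure.restrict_apply' (hsm x)]
    refine measure_mono_null (fun y hy => ?_) hE
    simp only [mem_setOf_eq, mem_inter_iff] at hy ⊢
    exact ⟨fun h => hy.1 (by rw [h]), hy.2.2⟩
  have hMcong : ∀ b : ℝ, ∀ x : Euc N,
      (volume (ball x 1 ∩ {y ∈ Ω | V y ≤ b})).toReal
        = (volume (ball x 1 ∩ (Ω ∩ {y | g y ≤ b}))).toReal := by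
    intro b x
    congr 1
    refine measure_congr (ae_eq_set.2 ⟨?_, ?_⟩)
    · refine measure_mono_null (fun y hy => ?_) hE
      obtain ⟨⟨hball, hyΩ, hVb⟩, hnot⟩ := hy
      exact ⟨fun h => hnot ⟨hball, hyΩ, le_of_eq_of_le h.symm hVb⟩, hyΩ⟩
    · refine measure_mono_null (fun y hy => ?_) hE
      obtain ⟨⟨hball, hyΩ, hgb⟩, hnot⟩ := hy
      exact ⟨fun h => hnot ⟨hball, hyΩ, le_of_eq_of_le h hgb⟩, hyΩ⟩
  -- basic facts about `1/g`
  have hfin : ∀ x : Euc N, volume (ball x 1 ∩ Ω) ≠ ⊤ :=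
    fun x => (lt_of_le_of_lt (measure_mono inter_subset_left) measure_ball_lt_top).ne
  have hinvmeas : Measurable fun ξ => 1 / g ξ := measurable_const.div hgmeas
  have hinv_nonneg : ∀ ξ, 0 ≤ 1 / g ξ := fun ξ => le_of_lt (by positivity)
  have hinv_le : ∀ ξ, 1 / g ξ ≤ 1 / v₀ :=
    fun ξ => one_div_le_one_div_of_le hv₀ (hgv₀ ξ)
  have hint : ∀ x : Euc N, IntegrableOn (fun ξ => 1 / g ξ) (ball x 1 ∩ Ω) volume := by
    intro x
    refine Measure.integrableOn_of_bounded (M := 1 / v₀) (hfin x)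
      hinvmeas.aestronglyMeasurable (ae_of_all _ fun ξ => ?_)
    rw [Real.norm_eq_abs, abs_of_nonneg (hinv_nonneg ξ)]
    exact hinv_le ξ
  have hInn : ∀ x : Euc N, 0 ≤ ∫ ξ in ball x 1 ∩ Ω, 1 / g ξ :=
    fun x => integral_nonneg hinv_nonneg
  -- the main equivalence, for `g`
  have fwd : Tendsto (fun x : Euc N => ∫ ξ in ball x 1 ∩ Ω, 1 / g ξ) (atInfty N) (𝓝 0) →
      ∀ b > (0:ℝ), Tendsto
        (fun x : Euc N => (volume (ball x 1 ∩ (Ω ∩ {y | g y ≤ b}))).toReal)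
        (atInfty N) (𝓝 0) := by
    intro hI b hb
    have key : ∀ x : Euc N, (volume (ball x 1 ∩ (Ω ∩ {y | g y ≤ b}))).toReal
        ≤ b * ∫ ξ in ball x 1 ∩ Ω, 1 / g ξ := by
      intro x
      set S : Set (Euc N) := ball x 1 ∩ Ω ∩ {y | g y ≤ b} with hSdef
      have hSmeas : MeasurableSet S := (hsm x).inter (hgmeas measurableSet_Iic)
      have hSsub : S ⊆ ball x 1 ∩ Ω := inter_subset_left
      have hSfin : volume S ≠ ⊤ :=
        (lt_of_le_of_lt (measure_mono hSsub) (lt_top_iff_ne_top.2 (hfin x))).ne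
      have h1 : (volume S).toReal * (1 / b) = ∫ _ in S, (1 / b : ℝ) := by
        rw [setIntegral_const, smul_eq_mul]
        rfl
      have h2 : ∫ _ in S, (1 / b : ℝ) ≤ ∫ ξ in S, 1 / g ξ := by
        refine setIntegral_mono_on (integrableOn_const hSfin)
          ((hint x).mono_set hSsub) hSmeas (fun ξ hξ => ?_)
        exact one_div_le_one_div_of_le (hgpos ξ) hξ.2
      have h3 : ∫ ξ in S, 1 / g ξ ≤ ∫ ξ in ball x 1 ∩ Ω, 1 / g ξ :=
        setIntegral_mono_set (hint x) (ae_of_all _ hinv_nonneg)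
          (HasSubset.Subset.eventuallyLE hSsub)
      have h4 : (volume S).toReal * (1 / b) ≤ ∫ ξ in ball x 1 ∩ Ω, 1 / g ξ :=
        h1 ▸ le_trans h2 h3
      have hvol : volume (ball x 1 ∩ (Ω ∩ {y | g y ≤ b})) = volume S := by
        rw [hSdef, inter_assoc]
      rw [hvol]
      have := mul_le_mul_of_nonneg_left h4 hb.le
      calc (volume S).toReal = b * ((volume S).toReal * (1 / b)) := by
            field_simp
        _ ≤ b * ∫ ξ in ball x 1 ∩ Ω, 1 / g ξ := this
    have hbI : Tendsto (fun x : Euc N => b * ∫ ξ in ball x 1 ∩ Ω, 1 / g ξ)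
        (atInfty N) (𝓝 0) := by
      have := hI.const_mul b
      simpa using this
    exact squeeze_zero (fun x => ENNReal.toReal_nonneg) key hbI
  have bwd : (∀ b > (0:ℝ), Tendsto
        (fun x : Euc N => (volume (ball x 1 ∩ (Ω ∩ {y | g y ≤ b}))).toReal)
        (atInfty N) (𝓝 0)) →
      Tendsto (fun x : Euc N => ∫ ξ in ball x 1 ∩ Ω, 1 / g ξ) (atInfty N) (𝓝 0) := by
    intro hM
    rw [NormedAddCommGroup.tendsto_nhds_zero]
    intro ε hε
    set c : ℝ := (volume (ball (0 : Euc N) 1)).toReal with hcdef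
    have hc0 : 0 ≤ c := ENNReal.toReal_nonneg
    set b : ℝ := max 1 (2 * c / ε) with hbdef
    have hb : (0:ℝ) < b := lt_of_lt_of_le one_pos (le_max_left _ _)
    have hcb : c / b ≤ ε / 2 := by
      have h2 : 2 * c / ε ≤ b := le_max_right _ _
      rw [div_le_iff₀ hε] at h2
      rw [div_le_iff₀ hb]
      nlinarith
    -- pointwise bound on the integral
    have key : ∀ x : Euc N, ∫ ξ in ball x 1 ∩ Ω, 1 / g ξ
        ≤ (1 / v₀) * (volume (ball x 1 ∩ (Ω ∩ {y | g y ≤ b}))).toReal + c / b := by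
      intro x
      set s : Set (Euc N) := ball x 1 ∩ Ω with hsdef
      set t : Set (Euc N) := {y | g y ≤ b} with htdef
      have htm : MeasurableSet t := hgmeas measurableSet_Iic
      have hind : IntegrableOn (fun ξ => (1 / v₀) * t.indicator (fun _ => (1:ℝ)) ξ + 1 / b)
          s volume := by
        refine Integrable.add ?_ (integrableOn_const (hfin x))
        exact ((integrableOn_const (C := (1:ℝ)) (hfin x)).indicator
          htm).const_mul _
      have hptwise : ∀ ξ ∈ s,
          1 / g ξ ≤ (1 / v₀) * t.indicator (fun _ => (1:ℝ)) ξ + 1 / b := by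
        intro ξ _
        by_cases hξ : ξ ∈ t
        · rw [indicator_of_mem hξ]
          have : (0:ℝ) ≤ 1 / b := by positivity
          have := hinv_le ξ
          nlinarith
        · rw [indicator_of_notMem hξ]
          have hbg : b ≤ g ξ := le_of_lt (not_le.mp hξ)
          have := one_div_le_one_div_of_le hb hbg
          nlinarith
      have h1 : ∫ ξ in s, 1 / g ξ
          ≤ ∫ ξ in s, ((1 / v₀) * t.indicator (fun _ => (1:ℝ)) ξ + 1 / b) :=
        setIntegral_mono_on (hint x) hind (hsm x) hptwise
      have h2 : ∫ ξ in s, ((1 / v₀) * t.indicator (fun _ => (1:ℝ)) ξ + 1 / b)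
          = (1 / v₀) * (volume (s ∩ t)).toReal + (volume s).toReal * (1 / b) := by
        rw [integral_add (((integrableOn_const (C := (1:ℝ))
          (hfin x)).indicator htm).const_mul _)
          (integrableOn_const (C := 1 / b) (hfin x))]
        rw [integral_const_mul, setIntegral_indicator htm, setIntegral_const,
          setIntegral_const, smul_eq_mul, smul_eq_mul, mul_one]
        rfl
      have h3 : (volume s).toReal * (1 / b) ≤ c / b := by
        have hvle : volume s ≤ volume (ball x 1) := measure_mono inter_subset_left
        have hballeq : volume (ball x 1) = volume (ball (0 : Euc N) 1) :=
          Measure.addHaar_ball_center volume x 1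
        have : (volume s).toReal ≤ c := by
          rw [hcdef, ← hballeq]
          exact ENNReal.toReal_mono measure_ball_lt_top.ne hvle
        calc (volume s).toReal * (1 / b) ≤ c * (1 / b) :=
              mul_le_mul_of_nonneg_right this (by positivity)
          _ = c / b := by ring
      have hst : s ∩ t = ball x 1 ∩ (Ω ∩ t) := by rw [hsdef, inter_assoc]
      calc ∫ ξ in s, 1 / g ξ
          ≤ (1 / v₀) * (volume (s ∩ t)).toReal + (volume s).toReal * (1 / b) :=
            h2 ▸ h1
        _ ≤ (1 / v₀) * (volume (ball x 1 ∩ (Ω ∩ t))).toReal + c / b := by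
            rw [hst]; linarith [h3]
    have hMb := hM b hb
    rw [NormedAddCommGroup.tendsto_nhds_zero] at hMb
    filter_upwards [hMb (v₀ * ε / 2) (by positivity)] with x hx
    have hxnn : (0:ℝ) ≤ (volume (ball x 1 ∩ (Ω ∩ {y | g y ≤ b}))).toReal :=
      ENNReal.toReal_nonneg
    rw [Real.norm_eq_abs, abs_of_nonneg hxnn] at hx
    rw [Real.norm_eq_abs, abs_of_nonneg (hInn x)]
    have h1 : (1 / v₀) * (volume (ball x 1 ∩ (Ω ∩ {y | g y ≤ b}))).toReal
        < (1 / v₀) * (v₀ * ε / 2) :=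
      mul_lt_mul_of_pos_left hx (by positivity)
    have h2 : (1 / v₀) * (v₀ * ε / 2) = ε / 2 := by field_simp
    calc ∫ ξ in ball x 1 ∩ Ω, 1 / g ξ
        ≤ (1 / v₀) * (volume (ball x 1 ∩ (Ω ∩ {y | g y ≤ b}))).toReal + c / b := key x
      _ < ε / 2 + ε / 2 := by nlinarith
      _ = ε := by ring
  constructor
  · constructor
    · intro h b hb
      have hIg : Tendsto (fun x : Euc N => ∫ ξ in ball x 1 ∩ Ω, 1 / g ξ)
          (atInfty N) (𝓝 0) := Tendsto.congr hIcong h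
      exact Tendsto.congr (fun x => (hMcong b x).symm) (fwd hIg b hb)
    · intro h
      have hMg : ∀ b > (0:ℝ), Tendsto
          (fun x : Euc N => (volume (ball x 1 ∩ (Ω ∩ {y | g y ≤ b}))).toReal)
          (atInfty N) (𝓝 0) :=
        fun b hb => Tendsto.congr (hMcong b) (h b hb)
      exact Tendsto.congr (fun x => (hIcong x).symm) (bwd hMg)
  · intro cst hcst hVcst
    have heq : ∀ x : Euc N, ∫ ξ in ball x 1 ∩ Ω, 1 / V ξ
        = (volume (ball x 1 ∩ Ω)).toReal * (1 / cst) := by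
      intro x
      rw [setIntegral_congr_fun (hsm x)
        (fun ξ hξ => show 1 / V ξ = 1 / cst by rw [hVcst ξ hξ.2] : EqOn (fun ξ => 1 / V ξ) (fun _ => 1 / cst)
          (ball x 1 ∩ Ω)), setIntegral_const, smul_eq_mul]
      rfl
    constructor
    · intro h
      have h' := (Tendsto.congr heq h).mul_const cst
      simp only [zero_mul] at h'
      refine Tendsto.congr (fun x => ?_) h'
      field_simp
    · intro h
      refine Tendsto.congr (fun x => (heq x).symm) ?_
      have h' := h.mul_const (1 / cst)
      simpa using h'
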